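/- If μ₁ ≠ μ₂, then for every k ≥ 0, Σ_{n=0}^{k} ((n+1)/μ₁)·p₁(n|k) = 1/(μ₁−μ₂) − ((k+1)/μ₁)·μ₂^{k+1}/(μ₁^{k+1}−μ₂^{k+1}). -/

import Mathlib

/-- `p₁(n|k)`: conditional probability that the stationary queue length at node 1 equals `n`
given `k` customers in total; `0` for `n > k`. -/
noncomputable def p1 (μ₁ μ₂ : ℝ) (n k : ℕ) : ℝ :=
  if n ≤ k then μ₁ ^ (k - n) * μ₂ ^ n / ∑ h ∈ Finset.range (k + 1), μ₁ ^ (k - h) * μ₂ ^ h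
  else 0

private lemma A_rec (μ₁ μ₂ : ℝ) (k : ℕ) :
    ∑ h ∈ Finset.range (k + 2), μ₁ ^ (k + 1 - h) * μ₂ ^ h
      = μ₁ * ∑ h ∈ Finset.range (k + 1), μ₁ ^ (k - h) * μ₂ ^ h + μ₂ ^ (k + 1) := by
  rw [Finset.sum_range_succ, Finset.mul_sum]
  congr 1
  · apply Finset.sum_congr rfl
    intro n hn
    have hnk : n ≤ k := Nat.lt_succ_iff.mp (Finset.mem_range.mp hn)
    have : k + 1 - n = (k - n) + 1 := by omega
    rw [this, pow_succ]; ring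
  · rw [Nat.sub_self, pow_zero, one_mul]

private lemma B_rec (μ₁ μ₂ : ℝ) (k : ℕ) :
    ∑ n ∈ Finset.range (k + 2), ((n : ℝ) + 1) * (μ₁ ^ (k + 1 - n) * μ₂ ^ n)
      = μ₁ * ∑ n ∈ Finset.range (k + 1), ((n : ℝ) + 1) * (μ₁ ^ (k - n) * μ₂ ^ n)
        + ((k : ℝ) + 2) * μ₂ ^ (k + 1) := by
  rw [Finset.sum_range_succ, Finset.mul_sum]
  congr 1
  · apply Finset.sum_congr rfl
    intro n hn
    have hnk : n ≤ k := Nat.lt_succ_iff.mp (Finset.mem_range.mp hn)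
    have : k + 1 - n = (k - n) + 1 := by omega
    rw [this, pow_succ]; ring
  · rw [Nat.sub_self, pow_zero]; push_cast; ring

private lemma key (μ₁ μ₂ : ℝ) (k : ℕ) :
    (μ₁ - μ₂) * ∑ n ∈ Finset.range (k + 1), ((n : ℝ) + 1) * (μ₁ ^ (k - n) * μ₂ ^ n)
      = μ₁ * (∑ h ∈ Finset.range (k + 1), μ₁ ^ (k - h) * μ₂ ^ h)
        - ((k : ℝ) + 1) * μ₂ ^ (k + 1) := by
  induction k with
  | zero => simp
  | succ k ih =>
    rw [B_rec, A_rec]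
    push_cast
    linear_combination μ₁ * ih

private lemma A_eq (μ₁ μ₂ : ℝ) (k : ℕ) :
    (μ₁ - μ₂) * ∑ h ∈ Finset.range (k + 1), μ₁ ^ (k - h) * μ₂ ^ h
      = μ₁ ^ (k + 1) - μ₂ ^ (k + 1) := by
  induction k with
  | zero => simp
  | succ k ih =>
    rw [A_rec]
    linear_combination μ₁ * ih

/-- If `μ₁ ≠ μ₂`, then for every `k ≥ 0`,
`Σ_{n=0}^{k} ((n+1)/μ₁)·p₁(n|k) = 1/(μ₁−μ₂) − ((k+1)/μ₁)·μ₂^{k+1}/(μ₁^{k+1}−μ₂^{k+1})`. -/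
theorem stmt_10 (μ₁ μ₂ : ℝ) (hμ₁ : 0 < μ₁) (hμ₂ : 0 < μ₂) (hne : μ₁ ≠ μ₂) :
    ∀ k : ℕ, ∑ n ∈ Finset.range (k + 1), ((n : ℝ) + 1) / μ₁ * p1 μ₁ μ₂ n k =
      1 / (μ₁ - μ₂) - ((k : ℝ) + 1) / μ₁ * μ₂ ^ (k + 1) / (μ₁ ^ (k + 1) - μ₂ ^ (k + 1)) := by
  intro k
  set A := ∑ h ∈ Finset.range (k + 1), μ₁ ^ (k - h) * μ₂ ^ h with hA
  have hApos : 0 < A := by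
    apply Finset.sum_pos
    · intro i _; positivity
    · exact ⟨0, by simp⟩
  have hsub : μ₁ - μ₂ ≠ 0 := sub_ne_zero.mpr hne
  have hdiff : μ₁ ^ (k + 1) - μ₂ ^ (k + 1) = (μ₁ - μ₂) * A := (A_eq μ₁ μ₂ k).symm
  have hdne : μ₁ ^ (k + 1) - μ₂ ^ (k + 1) ≠ 0 := by
    rw [hdiff]; exact mul_ne_zero hsub hApos.ne'
  have hsum : ∑ n ∈ Finset.range (k + 1), ((n : ℝ) + 1) / μ₁ * p1 μ₁ μ₂ n k
      = (∑ n ∈ Finset.range (k + 1), ((n : ℝ) + 1) * (μ₁ ^ (k - n) * μ₂ ^ n)) / (μ₁ * A) := by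
    rw [Finset.sum_div]
    apply Finset.sum_congr rfl
    intro n hn
    have hnk : n ≤ k := Nat.lt_succ_iff.mp (Finset.mem_range.mp hn)
    rw [p1, if_pos hnk, ← hA]
    field_simp
  rw [hsum, hdiff]
  have hk := key μ₁ μ₂ k
  rw [← hA] at hk
  set B := ∑ n ∈ Finset.range (k + 1), ((n : ℝ) + 1) * (μ₁ ^ (k - n) * μ₂ ^ n) with hB
  field_simp
  linear_combination hk
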